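/- If the antipode S of H is bijective and A is a left symmetric partial H-module algebra, then the set H·1_A = {h·1_A : h ∈ H} commutes elementwise with the subalgebra of right invariants A^{H,r}; consequently, the left and right invariant subalgebras coincide: A^H = A^{H,r}. -/

import Mathlib

open TensorProduct LinearMap

noncomputable section

variable (k : Type*) [Field k]
variable (H : Type*) [Ring H] [HopfAlgebra k H]
variable (A : Type*) [Ring A] [Algebra k A]

/-- A left partial action of a Hopf algebra `H` on an algebra `A` (Caenepeel–Janssen):
(PA1) `h·(ab) = (h₁·a)(h₂·b)`, (PA2) `1·a = a`, (PA3) `h·(g·a) = (h₁·1)((h₂g)·a)`. -/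
structure PartialAction where
  act : H →ₗ[k] A →ₗ[k] A
  pa1 : ∀ a b : A, act.flip (a * b) =
    LinearMap.mul' k A ∘ₗ TensorProduct.map (act.flip a) (act.flip b) ∘ₗ Coalgebra.comul
  pa2 : ∀ a : A, act 1 a = a
  pa3 : ∀ (g : H) (a : A), act.flip (act g a) =
    LinearMap.mul' k A ∘ₗ
      TensorProduct.map (act.flip 1) ((act.flip a) ∘ₗ LinearMap.mulRight k g) ∘ₗ Coalgebra.comul

variable {k H A}

/-- (PA4): the partial action is symmetric: `h·(g·a) = ((h₁g)·a)(h₂·1)`. -/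
def PartialAction.IsSymmetric (α : PartialAction k H A) : Prop :=
  ∀ (g : H) (a : A), α.act.flip (α.act g a) =
    LinearMap.mul' k A ∘ₗ
      TensorProduct.map ((α.act.flip a) ∘ₗ LinearMap.mulRight k g) (α.act.flip 1) ∘ₗ
        Coalgebra.comul

/-- Left invariants `A^H`. -/
def PartialAction.leftInv (α : PartialAction k H A) : Set A :=
  {a | ∀ h : H, α.act h a = a * α.act h 1}

/-- Right invariants `A^{H,r}`. -/
def PartialAction.rightInv (α : PartialAction k H A) : Set A :=
  {a | ∀ h : H, α.act h a = α.act h 1 * a}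

/-- `t` is a left integral in `H`. -/
def IsLeftIntegral (t : H) : Prop := ∀ h : H, h * t = Coalgebra.counit (R := k) h • t

/-- `t` is a right integral in `H`. -/
def IsRightIntegral (t : H) : Prop := ∀ h : H, t * h = Coalgebra.counit (R := k) h • t

/-- Convolution product on the dual `H* = H →ₗ[k] k`. -/
def conv (f g : H →ₗ[k] k) : H →ₗ[k] k :=
  LinearMap.mul' k k ∘ₗ TensorProduct.map f g ∘ₗ Coalgebra.comul

/-- `T ∈ H*` is a right integral: `T ∗ f = f(1) T`. -/
def IsRightIntegralDual (T : H →ₗ[k] k) : Prop := ∀ f : H →ₗ[k] k, conv T f = f 1 • T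

/-- `T ∈ H*` is a left integral: `f ∗ T = f(1) T`. -/
def IsLeftIntegralDual (T : H →ₗ[k] k) : Prop := ∀ f : H →ₗ[k] k, conv f T = f 1 • T

namespace PartialAction

variable (α : PartialAction k H A)

/-- `ψ (h ⊗ b) = Σ (h₁·b) ⊗ h₂`. -/
def psi : H ⊗[k] A →ₗ[k] A ⊗[k] H :=
  TensorProduct.map (TensorProduct.lift α.act) LinearMap.id
    ∘ₗ (TensorProduct.assoc k H A H).symm.toLinearMap
    ∘ₗ TensorProduct.map LinearMap.id (TensorProduct.comm k H A).toLinearMap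
    ∘ₗ (TensorProduct.assoc k H H A).toLinearMap
    ∘ₗ TensorProduct.map Coalgebra.comul LinearMap.id

/-- The smash product multiplication on `A ⊗ H`:
`(a # h)(b # g) = a(h₁·b) # h₂g`, as a linear map on the tensor square. -/
def smashMul' : (A ⊗[k] H) ⊗[k] (A ⊗[k] H) →ₗ[k] A ⊗[k] H :=
  TensorProduct.map (LinearMap.mul' k A) (LinearMap.mul' k H)
    ∘ₗ (TensorProduct.assoc k A A (H ⊗[k] H)).symm.toLinearMap
    ∘ₗ TensorProduct.map LinearMap.id
        ((TensorProduct.assoc k A H H).toLinearMap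
          ∘ₗ TensorProduct.map α.psi LinearMap.id
          ∘ₗ (TensorProduct.assoc k H A H).symm.toLinearMap)
    ∘ₗ (TensorProduct.assoc k A H (A ⊗[k] H)).toLinearMap

/-- The smash product multiplication, curried. -/
def sm : (A ⊗[k] H) →ₗ[k] (A ⊗[k] H) →ₗ[k] A ⊗[k] H := TensorProduct.curry α.smashMul'

/-- `1 # 1`. -/
def unit : A ⊗[k] H := (1 : A) ⊗ₜ[k] (1 : H)

/-- `j x = x · (1 # 1)`; the element `a #̲ h` of the partial smash product. -/
def j : A ⊗[k] H →ₗ[k] A ⊗[k] H := α.sm.flip (unit)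

/-- The partial smash product `A #̲ H`, as a subspace of `A ⊗ H`. -/
def smash : Submodule k (A ⊗[k] H) := LinearMap.range α.j

/-- The action of `A # H` on `A`: `(a # h) ▸ b = a (h·b)`. -/
def act2 : A ⊗[k] H →ₗ[k] A →ₗ[k] A :=
  TensorProduct.curry (LinearMap.mul' k A
    ∘ₗ TensorProduct.map LinearMap.id (TensorProduct.lift α.act)
    ∘ₗ (TensorProduct.assoc k A H A).toLinearMap)

end PartialAction

/-- `Φ(a # h) = a T(h)`. -/
def PhiMap (T : H →ₗ[k] k) : A ⊗[k] H →ₗ[k] A :=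
  (TensorProduct.rid k A).toLinearMap ∘ₗ TensorProduct.map LinearMap.id T

/-- `θ(f) = f(t₁) t₂`. -/
def thetaMap (t : H) : (H →ₗ[k] k) →ₗ[k] H :=
  (TensorProduct.lid k H).toLinearMap
    ∘ₗ LinearMap.applyₗ (Coalgebra.comul (R := k) t)
    ∘ₗ (TensorProduct.mapBilinear (RingHom.id k) H H k H).flip LinearMap.id

section AuxHopf

variable {k : Type*} [Field k]
variable {H : Type*} [Ring H] [HopfAlgebra k H]

lemma repr_counit_left {x : H} {ι : Type*} (r : Coalgebra.Repr k x ι) :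
    ∑ i ∈ r.index, Coalgebra.counit (R := k) (r.left i) • r.right i = x := by
  have h2 : (TensorProduct.lid k H) ((Coalgebra.counit (R := k)).rTensor H (Coalgebra.comul x))
      = x := by simp
  rw [← r.eq] at h2
  rw [map_sum, map_sum] at h2
  simp only [LinearMap.rTensor_tmul, TensorProduct.lid_tmul] at h2
  exact h2

lemma repr_counit_right {x : H} {ι : Type*} (r : Coalgebra.Repr k x ι) :
    ∑ i ∈ r.index, Coalgebra.counit (R := k) (r.right i) • r.left i = x := by
  have h2 : (TensorProduct.rid k H) ((Coalgebra.counit (R := k)).lTensor H (Coalgebra.comul x))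
      = x := by simp
  rw [← r.eq] at h2
  rw [map_sum, map_sum] at h2
  simp only [LinearMap.lTensor_tmul, TensorProduct.rid_tmul] at h2
  exact h2

/-- Combined representation of `comul (x*y)`. -/
def mulRepr {x y : H} {ι κ : Type*} (rx : Coalgebra.Repr k x ι) (ry : Coalgebra.Repr k y κ) :
    Coalgebra.Repr k (x * y) (ι × κ) where
  index := rx.index ×ˢ ry.index
  left p := rx.left p.1 * ry.left p.2
  right p := rx.right p.1 * ry.right p.2
  eq := by
    rw [Bialgebra.comul_mul, ← rx.eq, ← ry.eq, Finset.sum_mul_sum, Finset.sum_product]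
    simp [Algebra.TensorProduct.tmul_mul_tmul]

lemma antipode_one' : HopfAlgebra.antipode (R := k) (A := H) 1 = 1 := by
  have h := HopfAlgebra.mul_antipode_rTensor_comul_apply (R := k) (A := H) 1
  simpa [Algebra.TensorProduct.one_def] using h

/-- Collapse `∑ S(h₁) h₂ ⊗ h₃ = 1 ⊗ h`. -/
lemma J_collapse {a : H} {ι κ Λ : Type*} (ra : Coalgebra.Repr k a ι)
    (ral : ∀ i : ra.ι, Coalgebra.Repr k (ra.left i) κ)
    (rar : ∀ i : ra.ι, Coalgebra.Repr k (ra.right i) Λ) :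
    ∑ i ∈ ra.index, ∑ q ∈ (rar i).index,
      (HopfAlgebra.antipode (R := k) (ra.left i) * (rar i).left q) ⊗ₜ[k] (rar i).right q
      = (1 : H) ⊗ₜ[k] a := by
  have coas := Coalgebra.sum_tmul_tmul_eq (R := k) ra ral rar
  set Θ : H ⊗[k] (H ⊗[k] H) →ₗ[k] H ⊗[k] H :=
    TensorProduct.map
        (LinearMap.mul' k H ∘ₗ TensorProduct.map (HopfAlgebra.antipode (R := k)) LinearMap.id)
        LinearMap.id
      ∘ₗ (TensorProduct.assoc k H H H).symm.toLinearMap with hΘ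
  have happ := congrArg (⇑Θ) coas
  simp only [hΘ, map_sum, LinearMap.comp_apply, LinearEquiv.coe_coe,
    TensorProduct.assoc_symm_tmul, TensorProduct.map_tmul, LinearMap.mul'_apply,
    LinearMap.id_coe, id_eq] at happ
  rw [← happ]
  have inner : ∀ i ∈ ra.index, ∑ l ∈ (ral i).index,
      (HopfAlgebra.antipode (R := k) ((ral i).left l) * (ral i).right l) ⊗ₜ[k] ra.right i
      = (1 : H) ⊗ₜ[k] (Coalgebra.counit (R := k) (ra.left i) • ra.right i) := by
    intro i _
    rw [← TensorProduct.sum_tmul, HopfAlgebra.sum_antipode_mul_eq_algebraMap_counit (ral i),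
        Algebra.algebraMap_eq_smul_one, TensorProduct.smul_tmul]
  rw [Finset.sum_congr rfl inner, ← TensorProduct.tmul_sum, repr_counit_left ra]

end AuxHopf

section AuxAntipode

variable {k : Type*} [Field k]
variable {H : Type*} [Ring H] [HopfAlgebra k H]

lemma antipode_mul' (a b : H) :
    HopfAlgebra.antipode (R := k) (a * b)
      = HopfAlgebra.antipode (R := k) b * HopfAlgebra.antipode (R := k) a := by
  classical
  let ra := Coalgebra.Repr.arbitrary k a
  let rb := Coalgebra.Repr.arbitrary k b
  let ral : ∀ i : ra.ι, Coalgebra.Repr k (ra.left i) (H × H) :=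
    fun i => Coalgebra.Repr.arbitrary k _
  let rar : ∀ i : ra.ι, Coalgebra.Repr k (ra.right i) (H × H) :=
    fun i => Coalgebra.Repr.arbitrary k _
  let rbl : ∀ j : rb.ι, Coalgebra.Repr k (rb.left j) (H × H) :=
    fun j => Coalgebra.Repr.arbitrary k _
  let rbr : ∀ j : rb.ι, Coalgebra.Repr k (rb.right j) (H × H) :=
    fun j => Coalgebra.Repr.arbitrary k _
  have hSa : HopfAlgebra.antipode (R := k) a
      = ∑ i ∈ ra.index, Coalgebra.counit (R := k) (ra.right i) •
          HopfAlgebra.antipode (R := k) (ra.left i) := by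
    conv_lhs => rw [← repr_counit_right ra]
    rw [map_sum]
    simp only [map_smul]
  have hSb : HopfAlgebra.antipode (R := k) b
      = ∑ j ∈ rb.index, Coalgebra.counit (R := k) (rb.right j) •
          HopfAlgebra.antipode (R := k) (rb.left j) := by
    conv_lhs => rw [← repr_counit_right rb]
    rw [map_sum]
    simp only [map_smul]
  have step2 : HopfAlgebra.antipode (R := k) b * HopfAlgebra.antipode (R := k) a
      = ∑ j ∈ rb.index, ∑ i ∈ ra.index,
          (Coalgebra.counit (R := k) (ra.right i) * Coalgebra.counit (R := k) (rb.right j)) •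
            (HopfAlgebra.antipode (R := k) (rb.left j) *
              HopfAlgebra.antipode (R := k) (ra.left i)) := by
    rw [hSa, hSb, Finset.sum_mul_sum]
    refine Finset.sum_congr rfl fun j _ => Finset.sum_congr rfl fun i _ => ?_
    rw [smul_mul_smul_comm, mul_comm]
  have step3 : ∀ j ∈ rb.index, ∀ i ∈ ra.index,
      (Coalgebra.counit (R := k) (ra.right i) * Coalgebra.counit (R := k) (rb.right j)) •
          (HopfAlgebra.antipode (R := k) (rb.left j) *
            HopfAlgebra.antipode (R := k) (ra.left i))
      = ∑ l ∈ (rar i).index, ∑ m ∈ (rbr j).index,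
          (HopfAlgebra.antipode (R := k) (rb.left j) *
            HopfAlgebra.antipode (R := k) (ra.left i)) *
          (((rar i).left l * (rbr j).left m) *
            HopfAlgebra.antipode (R := k) ((rar i).right l * (rbr j).right m)) := by
    intro j _ i _
    have hmul := HopfAlgebra.sum_mul_antipode_eq_algebraMap_counit (R := k) (mulRepr (rar i) (rbr j))
    simp only [mulRepr] at hmul
    rw [Finset.sum_product] at hmul
    rw [Algebra.smul_def, Algebra.commutes, ← Bialgebra.counit_mul (R := k), ← hmul,
        Finset.mul_sum]
    exact Finset.sum_congr rfl fun l _ => by rw [Finset.mul_sum]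
  have Ja := J_collapse ra ral rar
  have step4 : ∀ j : rb.ι, ∀ m : (rbr j).ι,
      ∑ i ∈ ra.index, ∑ l ∈ (rar i).index,
        (HopfAlgebra.antipode (R := k) (rb.left j) *
          ((HopfAlgebra.antipode (R := k) (ra.left i) * (rar i).left l) * (rbr j).left m)) *
          HopfAlgebra.antipode (R := k) ((rar i).right l * (rbr j).right m)
      = (HopfAlgebra.antipode (R := k) (rb.left j) * ((1:H) * (rbr j).left m)) *
          HopfAlgebra.antipode (R := k) (a * (rbr j).right m) := by
    intro j m
    set Xi : H ⊗[k] H →ₗ[k] H :=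
      LinearMap.mul' k H ∘ₗ TensorProduct.map
        (LinearMap.mulLeft k (HopfAlgebra.antipode (R := k) (rb.left j)) ∘ₗ
          LinearMap.mulRight k ((rbr j).left m))
        (HopfAlgebra.antipode (R := k) ∘ₗ LinearMap.mulRight k ((rbr j).right m)) with hXi
    have happ := congrArg (⇑Xi) Ja
    simp only [hXi, map_sum, LinearMap.comp_apply, TensorProduct.map_tmul,
      LinearMap.mul'_apply, LinearMap.mulLeft_apply, LinearMap.mulRight_apply] at happ
    exact happ
  have Jb := J_collapse rb rbl rbr
  have step5 :
      ∑ j ∈ rb.index, ∑ m ∈ (rbr j).index,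
        (HopfAlgebra.antipode (R := k) (rb.left j) * (rbr j).left m) *
          HopfAlgebra.antipode (R := k) (a * (rbr j).right m)
      = (1:H) * HopfAlgebra.antipode (R := k) (a * b) := by
    set Xi' : H ⊗[k] H →ₗ[k] H :=
      LinearMap.mul' k H ∘ₗ TensorProduct.map LinearMap.id
        (HopfAlgebra.antipode (R := k) ∘ₗ LinearMap.mulLeft k a) with hXi'
    have happ := congrArg (⇑Xi') Jb
    simp only [hXi', map_sum, LinearMap.comp_apply, TensorProduct.map_tmul,
      LinearMap.mul'_apply, LinearMap.mulLeft_apply, LinearMap.id_coe, id_eq] at happ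
    exact happ
  symm
  calc HopfAlgebra.antipode (R := k) b * HopfAlgebra.antipode (R := k) a
      = ∑ j ∈ rb.index, ∑ i ∈ ra.index,
          (Coalgebra.counit (R := k) (ra.right i) * Coalgebra.counit (R := k) (rb.right j)) •
            (HopfAlgebra.antipode (R := k) (rb.left j) *
              HopfAlgebra.antipode (R := k) (ra.left i)) := step2
    _ = ∑ j ∈ rb.index, ∑ i ∈ ra.index, ∑ l ∈ (rar i).index, ∑ m ∈ (rbr j).index,
          (HopfAlgebra.antipode (R := k) (rb.left j) *
            HopfAlgebra.antipode (R := k) (ra.left i)) *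
          (((rar i).left l * (rbr j).left m) *
            HopfAlgebra.antipode (R := k) ((rar i).right l * (rbr j).right m)) :=
        Finset.sum_congr rfl fun j hj => Finset.sum_congr rfl fun i hi => step3 j hj i hi
    _ = ∑ j ∈ rb.index, ∑ m ∈ (rbr j).index, ∑ i ∈ ra.index, ∑ l ∈ (rar i).index,
          (HopfAlgebra.antipode (R := k) (rb.left j) *
            HopfAlgebra.antipode (R := k) (ra.left i)) *
          (((rar i).left l * (rbr j).left m) *
            HopfAlgebra.antipode (R := k) ((rar i).right l * (rbr j).right m)) := by
        refine Finset.sum_congr rfl fun j _ => ?_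
        exact (Finset.sum_congr rfl fun i _ => Finset.sum_comm).trans Finset.sum_comm
    _ = ∑ j ∈ rb.index, ∑ m ∈ (rbr j).index,
          (HopfAlgebra.antipode (R := k) (rb.left j) * ((1:H) * (rbr j).left m)) *
            HopfAlgebra.antipode (R := k) (a * (rbr j).right m) := by
        refine Finset.sum_congr rfl fun j _ => Finset.sum_congr rfl fun m _ => ?_
        rw [← step4 j m]
        refine Finset.sum_congr rfl fun i _ => Finset.sum_congr rfl fun l _ => ?_
        simp only [mul_assoc]
    _ = (1:H) * HopfAlgebra.antipode (R := k) (a * b) := by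
        rw [← step5]
        simp only [one_mul]
    _ = HopfAlgebra.antipode (R := k) (a * b) := one_mul _

/-- The linear inverse of a bijective antipode. -/
def sInvMap (hS : Function.Bijective (HopfAlgebra.antipode (R := k) (A := H))) : H →ₗ[k] H :=
  ((LinearEquiv.ofBijective (HopfAlgebra.antipode (R := k)) hS).symm).toLinearMap

lemma antipode_sInvMap (hS : Function.Bijective (HopfAlgebra.antipode (R := k) (A := H)))
    (x : H) : HopfAlgebra.antipode (R := k) (sInvMap hS x) = x :=
  (LinearEquiv.ofBijective (HopfAlgebra.antipode (R := k)) hS).apply_symm_apply x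

lemma sum_mul_sInv (hS : Function.Bijective (HopfAlgebra.antipode (R := k) (A := H)))
    {x : H} {ι : Type*} (r : Coalgebra.Repr k x ι) :
    ∑ i ∈ r.index, r.right i * sInvMap hS (r.left i)
      = algebraMap k H (Coalgebra.counit (R := k) x) := by
  apply hS.injective
  show HopfAlgebra.antipode (R := k) _ = HopfAlgebra.antipode (R := k) _
  rw [map_sum]
  have e : ∀ i ∈ r.index,
      HopfAlgebra.antipode (R := k) (r.right i * sInvMap hS (r.left i))
        = r.left i * HopfAlgebra.antipode (R := k) (r.right i) := fun i _ => by
    rw [antipode_mul', antipode_sInvMap]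
  rw [Finset.sum_congr rfl e, HopfAlgebra.sum_mul_antipode_eq_algebraMap_counit r,
      Algebra.algebraMap_eq_smul_one, map_smul, antipode_one']

end AuxAntipode

section AuxPartial

lemma pa3' (α : PartialAction k H A) (g : H) (a : A) {h : H} {ι : Type*} (r : Coalgebra.Repr k h ι) :
    α.act h (α.act g a)
      = ∑ i ∈ r.index, α.act (r.left i) 1 * α.act (r.right i * g) a := by
  have e := LinearMap.congr_fun (α.pa3 g a) h
  rw [LinearMap.comp_apply, LinearMap.comp_apply, ← r.eq, map_sum, map_sum] at e
  simp only [LinearMap.flip_apply, TensorProduct.map_tmul, LinearMap.mul'_apply,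
    LinearMap.comp_apply, LinearMap.mulRight_apply] at e
  exact e

lemma pa4' (α : PartialAction k H A) (hsym : α.IsSymmetric) (g : H) (a : A)
    {h : H} {ι : Type*} (r : Coalgebra.Repr k h ι) :
    α.act h (α.act g a)
      = ∑ i ∈ r.index, α.act (r.left i * g) a * α.act (r.right i) 1 := by
  have e := LinearMap.congr_fun (hsym g a) h
  rw [LinearMap.comp_apply, LinearMap.comp_apply, ← r.eq, map_sum, map_sum] at e
  simp only [LinearMap.flip_apply, TensorProduct.map_tmul, LinearMap.mul'_apply,
    LinearMap.comp_apply, LinearMap.mulRight_apply] at e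
  exact e

lemma keyA (α : PartialAction k H A) (hsym : α.IsSymmetric)
    (hS : Function.Bijective (HopfAlgebra.antipode (R := k) (A := H)))
    {h : H} {ι κ Λ : Type*} (r : Coalgebra.Repr k h ι)
    (rl : ∀ i : r.ι, Coalgebra.Repr k (r.left i) κ)
    (rr : ∀ i : r.ι, Coalgebra.Repr k (r.right i) Λ) (a : A) :
    a * α.act h 1 = ∑ i ∈ r.index, ∑ q ∈ (rr i).index,
      α.act ((rr i).left q) 1 * α.act ((rr i).right q * sInvMap hS (r.left i)) a := by
  have coas := Coalgebra.sum_tmul_tmul_eq (R := k) r rl rr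
  set L : H ⊗[k] (H ⊗[k] H) →ₗ[k] A :=
    LinearMap.mul' k A ∘ₗ
      TensorProduct.map (α.act.flip a ∘ₗ LinearMap.mul' k H) (α.act.flip 1) ∘ₗ
      TensorProduct.map
        (TensorProduct.map LinearMap.id (sInvMap hS) ∘ₗ (TensorProduct.comm k H H).toLinearMap)
        LinearMap.id ∘ₗ
      (TensorProduct.assoc k H H H).symm.toLinearMap with hL
  have key := congrArg (⇑L) coas
  simp only [hL, map_sum, LinearMap.comp_apply, LinearEquiv.coe_coe,
    TensorProduct.assoc_symm_tmul, TensorProduct.comm_tmul, TensorProduct.map_tmul,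
    LinearMap.mul'_apply, LinearMap.id_coe, id_eq, LinearMap.flip_apply] at key
  have lhs_eq : ∀ i ∈ r.index,
      ∑ l ∈ (rl i).index,
        α.act ((rl i).right l * sInvMap hS ((rl i).left l)) a * α.act (r.right i) 1
      = Coalgebra.counit (R := k) (r.left i) • (a * α.act (r.right i) 1) := by
    intro i _
    rw [← Finset.sum_mul]
    have h1 : ∑ l ∈ (rl i).index, α.act ((rl i).right l * sInvMap hS ((rl i).left l)) a
        = Coalgebra.counit (R := k) (r.left i) • a := by
      calc ∑ l ∈ (rl i).index, α.act ((rl i).right l * sInvMap hS ((rl i).left l)) a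
          = α.act (∑ l ∈ (rl i).index, (rl i).right l * sInvMap hS ((rl i).left l)) a := by
            rw [map_sum, LinearMap.sum_apply]
        _ = α.act (algebraMap k H (Coalgebra.counit (R := k) (r.left i))) a := by
            rw [sum_mul_sInv hS (rl i)]
        _ = Coalgebra.counit (R := k) (r.left i) • a := by
            rw [Algebra.algebraMap_eq_smul_one, map_smul, LinearMap.smul_apply, α.pa2]
    rw [h1, smul_mul_assoc]
  have rhs_eq : ∀ i ∈ r.index,
      ∑ q ∈ (rr i).index,
        α.act ((rr i).left q * sInvMap hS (r.left i)) a * α.act ((rr i).right q) 1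
      = ∑ q ∈ (rr i).index,
        α.act ((rr i).left q) 1 * α.act ((rr i).right q * sInvMap hS (r.left i)) a := by
    intro i _
    rw [← pa4' α hsym (sInvMap hS (r.left i)) a (rr i), pa3' α (sInvMap hS (r.left i)) a (rr i)]
  calc a * α.act h 1
      = ∑ i ∈ r.index, Coalgebra.counit (R := k) (r.left i) • (a * α.act (r.right i) 1) := by
        have hact : α.act h 1
            = ∑ i ∈ r.index, Coalgebra.counit (R := k) (r.left i) • α.act (r.right i) 1 := by
          conv_lhs => rw [← repr_counit_left r]
          rw [map_sum, LinearMap.sum_apply]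
          exact Finset.sum_congr rfl fun i _ => by rw [map_smul, LinearMap.smul_apply]
        rw [hact, Finset.mul_sum]
        exact Finset.sum_congr rfl fun i _ => mul_smul_comm _ _ _
    _ = ∑ i ∈ r.index, ∑ l ∈ (rl i).index,
          α.act ((rl i).right l * sInvMap hS ((rl i).left l)) a * α.act (r.right i) 1 :=
        (Finset.sum_congr rfl lhs_eq).symm
    _ = ∑ i ∈ r.index, ∑ q ∈ (rr i).index,
          α.act ((rr i).left q * sInvMap hS (r.left i)) a * α.act ((rr i).right q) 1 := key
    _ = _ := Finset.sum_congr rfl rhs_eq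

lemma keyB (α : PartialAction k H A) (hsym : α.IsSymmetric)
    {h : H} {ι κ Λ : Type*} (r : Coalgebra.Repr k h ι)
    (rl : ∀ i : r.ι, Coalgebra.Repr k (r.left i) κ)
    (rr : ∀ i : r.ι, Coalgebra.Repr k (r.right i) Λ) (a : A) :
    α.act h 1 * a = ∑ i ∈ r.index, ∑ l ∈ (rl i).index,
      α.act ((rl i).left l * HopfAlgebra.antipode (R := k) (r.right i)) a *
        α.act ((rl i).right l) 1 := by
  have coas := Coalgebra.sum_tmul_tmul_eq (R := k) r rl rr
  set L : H ⊗[k] (H ⊗[k] H) →ₗ[k] A :=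
    LinearMap.mul' k A ∘ₗ
      TensorProduct.map (α.act.flip 1)
        (α.act.flip a ∘ₗ LinearMap.mul' k H ∘ₗ
          TensorProduct.map LinearMap.id (HopfAlgebra.antipode (R := k))) with hL
  have key := congrArg (⇑L) coas
  simp only [hL, map_sum, LinearMap.comp_apply, TensorProduct.map_tmul,
    LinearMap.mul'_apply, LinearMap.id_coe, id_eq, LinearMap.flip_apply] at key
  have rhs_col : ∀ i ∈ r.index,
      ∑ q ∈ (rr i).index, α.act (r.left i) 1 *
        α.act ((rr i).left q * HopfAlgebra.antipode (R := k) ((rr i).right q)) a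
      = Coalgebra.counit (R := k) (r.right i) • (α.act (r.left i) 1 * a) := by
    intro i _
    rw [← Finset.mul_sum]
    have h1 : ∑ q ∈ (rr i).index,
        α.act ((rr i).left q * HopfAlgebra.antipode (R := k) ((rr i).right q)) a
        = Coalgebra.counit (R := k) (r.right i) • a := by
      calc ∑ q ∈ (rr i).index,
          α.act ((rr i).left q * HopfAlgebra.antipode (R := k) ((rr i).right q)) a
          = α.act (∑ q ∈ (rr i).index,
              (rr i).left q * HopfAlgebra.antipode (R := k) ((rr i).right q)) a := by
            rw [map_sum, LinearMap.sum_apply]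
        _ = α.act (algebraMap k H (Coalgebra.counit (R := k) (r.right i))) a := by
            rw [HopfAlgebra.sum_mul_antipode_eq_algebraMap_counit (rr i)]
        _ = Coalgebra.counit (R := k) (r.right i) • a := by
            rw [Algebra.algebraMap_eq_smul_one, map_smul, LinearMap.smul_apply, α.pa2]
    rw [h1, mul_smul_comm]
  have lhs_link : ∀ i ∈ r.index,
      ∑ l ∈ (rl i).index, α.act ((rl i).left l) 1 *
        α.act ((rl i).right l * HopfAlgebra.antipode (R := k) (r.right i)) a
      = ∑ l ∈ (rl i).index,
        α.act ((rl i).left l * HopfAlgebra.antipode (R := k) (r.right i)) a *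
          α.act ((rl i).right l) 1 := by
    intro i _
    rw [← pa3' α (HopfAlgebra.antipode (R := k) (r.right i)) a (rl i),
        pa4' α hsym (HopfAlgebra.antipode (R := k) (r.right i)) a (rl i)]
  calc α.act h 1 * a
      = ∑ i ∈ r.index, Coalgebra.counit (R := k) (r.right i) • (α.act (r.left i) 1 * a) := by
        have hact : α.act h 1
            = ∑ i ∈ r.index, Coalgebra.counit (R := k) (r.right i) • α.act (r.left i) 1 := by
          conv_lhs => rw [← repr_counit_right r]
          rw [map_sum, LinearMap.sum_apply]
          exact Finset.sum_congr rfl fun i _ => by rw [map_smul, LinearMap.smul_apply]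
        rw [hact, Finset.sum_mul]
        exact Finset.sum_congr rfl fun i _ => smul_mul_assoc _ _ _
    _ = ∑ i ∈ r.index, ∑ q ∈ (rr i).index, α.act (r.left i) 1 *
          α.act ((rr i).left q * HopfAlgebra.antipode (R := k) ((rr i).right q)) a :=
        (Finset.sum_congr rfl rhs_col).symm
    _ = ∑ i ∈ r.index, ∑ l ∈ (rl i).index, α.act ((rl i).left l) 1 *
          α.act ((rl i).right l * HopfAlgebra.antipode (R := k) (r.right i)) a := key.symm
    _ = _ := Finset.sum_congr rfl lhs_link

lemma commA (α : PartialAction k H A) (hsym : α.IsSymmetric)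
    (hS : Function.Bijective (HopfAlgebra.antipode (R := k) (A := H)))
    (a : A) (ha : ∀ g : H, α.act g a = α.act g 1 * a) (h : H) :
    a * α.act h 1 = α.act h 1 * a := by
  classical
  let r := Coalgebra.Repr.arbitrary k h
  let rl : ∀ i : r.ι, Coalgebra.Repr k (r.left i) (H × H) := fun i => Coalgebra.Repr.arbitrary k _
  let rr : ∀ i : r.ι, Coalgebra.Repr k (r.right i) (H × H) := fun i => Coalgebra.Repr.arbitrary k _
  have k1 := keyA α hsym hS r rl rr a
  have k0 := keyA α hsym hS r rl rr 1
  rw [one_mul] at k0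
  rw [k1, k0, Finset.sum_mul]
  refine Finset.sum_congr rfl fun i _ => ?_
  rw [Finset.sum_mul]
  refine Finset.sum_congr rfl fun q _ => ?_
  rw [ha _]
  exact (mul_assoc _ _ _).symm

lemma commB (α : PartialAction k H A) (hsym : α.IsSymmetric)
    (a : A) (ha : ∀ g : H, α.act g a = a * α.act g 1) (h : H) :
    α.act h 1 * a = a * α.act h 1 := by
  classical
  let r := Coalgebra.Repr.arbitrary k h
  let rl : ∀ i : r.ι, Coalgebra.Repr k (r.left i) (H × H) := fun i => Coalgebra.Repr.arbitrary k _
  let rr : ∀ i : r.ι, Coalgebra.Repr k (r.right i) (H × H) := fun i => Coalgebra.Repr.arbitrary k _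
  have k1 := keyB α hsym r rl rr a
  have k0 := keyB α hsym r rl rr 1
  rw [mul_one] at k0
  rw [k1, k0, Finset.mul_sum]
  refine Finset.sum_congr rfl fun i _ => ?_
  rw [Finset.mul_sum]
  refine Finset.sum_congr rfl fun l _ => ?_
  rw [ha _]
  exact mul_assoc _ _ _

end AuxPartial
/-- if the antipode is bijective and the partial action is symmetric, then
`H·1_A` commutes with the right invariants, and the left and right invariants coincide. -/
theorem hOne_commutes_and_leftInv_eq_rightInv
    {k : Type*} [Field k] {H : Type*} [Ring H] [HopfAlgebra k H]
    {A : Type*} [Ring A] [Algebra k A] (α : PartialAction k H A)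
    (hS : Function.Bijective (HopfAlgebra.antipode (R := k) (A := H)))
    (hsym : α.IsSymmetric) :
    (∀ a ∈ α.rightInv, ∀ h : H, α.act h 1 * a = a * α.act h 1) ∧
      α.leftInv = α.rightInv := by
  constructor
  · intro a ha h
    exact (commA α hsym hS a ha h).symm
  · ext a
    simp only [PartialAction.leftInv, PartialAction.rightInv, Set.mem_setOf_eq]
    constructor
    · intro ha h
      rw [ha h, ← commB α hsym a ha h]
    · intro ha h
      rw [ha h, ← commA α hsym hS a ha h]


end
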